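/- Let θ' ∈ (0,1) satisfy (3(1−θ')²)/(2(2θ'+1)) · (√6 + 1/3) ≥ 4, let γ ≥ 1, set C' = (√6 + 1/3)γ. Let N be Poisson with mean m satisfying m ≤ θ' C' ln n, and assume (1−θ')(√6+1/3) ln n ≥ 2 and m ≤ n·F with F ≥ 0, m = nF. Then P(N − m ≥ (1−θ') C' ln n) ≤ F n^{−γ}. -/

import Mathlib

open MeasureTheory ProbabilityTheory Real
open scoped NNReal ENNReal

lemma myPoisson_apply (μ : ℝ≥0) (s : Set ℕ) :
    poissonMeasure μ s = ∑' k, s.indicator (fun k ↦ poissonPMF μ k) k := by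
  rw [poissonMeasure, Measure.sum_apply _ MeasurableSet.of_discrete]
  refine tsum_congr fun k => ?_
  rw [Measure.smul_apply, Measure.dirac_apply' _ MeasurableSet.of_discrete, smul_eq_mul]
  by_cases hk : k ∈ s <;> simp [hk, ← poissonPMFReal_ofReal_eq_poissonPMF, poissonPMFReal]

lemma myHasSum_poisson_mgf (μ l : ℝ) :
    HasSum (fun k : ℕ ↦ Real.exp (l * k) * (Real.exp (-μ) * μ ^ k / k.factorial))
      (Real.exp (μ * (Real.exp l - 1))) := by
  have h : HasSum (fun k : ℕ ↦ (μ * Real.exp l) ^ k / k.factorial)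
      (NormedSpace.exp (μ * Real.exp l)) :=
    NormedSpace.expSeries_div_hasSum_exp (μ * Real.exp l)
  have h2 := h.mul_left (Real.exp (-μ))
  have hfun : (fun k : ℕ ↦ Real.exp (-μ) * ((μ * Real.exp l) ^ k / k.factorial))
      = fun k : ℕ ↦ Real.exp (l * k) * (Real.exp (-μ) * μ ^ k / k.factorial) := by
    funext k
    rw [mul_pow, mul_comm l (k : ℝ), Real.exp_nat_mul]
    ring
  have hval : Real.exp (-μ) * NormedSpace.exp (μ * Real.exp l)
      = Real.exp (μ * (Real.exp l - 1)) := by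
    rw [← Real.exp_eq_exp_ℝ, ← Real.exp_add]
    congr 1
    ring
  rw [hfun, hval] at h2
  exact h2

lemma myPoisson_chernoff (μ : ℝ≥0) (K l : ℝ) (hl : 0 ≤ l) :
    poissonMeasure μ {k : ℕ | K ≤ (k : ℝ)} ≤
      ENNReal.ofReal (Real.exp ((μ : ℝ) * (Real.exp l - 1) - l * K)) := by
  rw [myPoisson_apply]
  set f : ℕ → ℝ := fun k ↦ Real.exp (l * ((k : ℝ) - K)) * poissonPMFReal μ k with hf_def
  have hf_nonneg : ∀ k, 0 ≤ f k := fun k ↦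
    mul_nonneg (Real.exp_pos _).le poissonPMFReal_nonneg
  have hf : HasSum f (Real.exp ((μ : ℝ) * (Real.exp l - 1) - l * K)) := by
    have h2 := (myHasSum_poisson_mgf (μ : ℝ) l).mul_left (Real.exp (-(l * K)))
    have hfun : (fun k : ℕ ↦ Real.exp (-(l * K)) *
        (Real.exp (l * k) * (Real.exp (-(μ:ℝ)) * (μ:ℝ) ^ k / k.factorial))) = f := by
      funext k
      simp only [hf_def, poissonPMFReal]
      rw [← mul_assoc, ← Real.exp_add]
      congr 2
      ring
    have hval : Real.exp (-(l * K)) * Real.exp ((μ:ℝ) * (Real.exp l - 1))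
        = Real.exp ((μ : ℝ) * (Real.exp l - 1) - l * K) := by
      rw [← Real.exp_add]; congr 1; ring
    rw [hfun, hval] at h2
    exact h2
  calc ∑' k, Set.indicator {k : ℕ | K ≤ (k : ℝ)} (fun k ↦ poissonPMF μ k) k
      ≤ ∑' k, ENNReal.ofReal (f k) := by
        refine Summable.tsum_le_tsum (fun k ↦ ?_) ENNReal.summable ENNReal.summable
        by_cases hk : k ∈ {k : ℕ | K ≤ (k : ℝ)}
        · rw [Set.indicator_of_mem hk]
          show ENNReal.ofReal (poissonPMFReal μ k) ≤ _
          refine ENNReal.ofReal_le_ofReal ?_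
          have h1 : (1 : ℝ) ≤ Real.exp (l * ((k : ℝ) - K)) := by
            rw [← Real.exp_zero]
            exact Real.exp_le_exp.mpr (mul_nonneg hl (by simpa using hk))
          exact le_mul_of_one_le_left poissonPMFReal_nonneg h1
        · rw [Set.indicator_of_notMem hk]; exact zero_le
    _ = ENNReal.ofReal (∑' k, f k) := (ENNReal.ofReal_tsum_of_nonneg hf_nonneg hf.summable).symm
    _ = _ := by rw [hf.tsum_eq]

lemma myFact_bound (j : ℕ) : (2 * 3 ^ j : ℝ) ≤ (j + 2).factorial := by
  have : 2 * 3 ^ j ≤ (j + 2).factorial := by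
    induction j with
    | zero => simp [Nat.factorial]
    | succ j ih =>
      have : (j + 3).factorial = (j + 3) * (j + 2).factorial := rfl
      calc 2 * 3 ^ (j + 1) = 3 * (2 * 3 ^ j) := by ring
        _ ≤ 3 * (j + 2).factorial := by omega
        _ ≤ (j + 3) * (j + 2).factorial := by
            exact Nat.mul_le_mul_right _ (by omega)
        _ = (j + 1 + 2).factorial := rfl
  exact_mod_cast this

lemma myExp_quad {x : ℝ} (hx0 : 0 ≤ x) (hx3 : x < 3) :
    Real.exp x ≤ 1 + x + x ^ 2 / 2 * (1 - x / 3)⁻¹ := by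
  have hsum : HasSum (fun k : ℕ ↦ x ^ k / k.factorial) (Real.exp x) := by
    rw [Real.exp_eq_exp_ℝ]; exact NormedSpace.expSeries_div_hasSum_exp x
  have htail : HasSum (fun j : ℕ ↦ x ^ (j + 2) / (j + 2).factorial)
      (Real.exp x - (1 + x)) := by
    have h := (hasSum_nat_add_iff' (f := fun k : ℕ ↦ x ^ k / k.factorial) 2).mpr hsum
    simpa [Finset.sum_range_succ, Nat.factorial] using h
  have hgeom : HasSum (fun j : ℕ ↦ x ^ 2 / 2 * (x / 3) ^ j)
      (x ^ 2 / 2 * (1 - x / 3)⁻¹) :=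
    (hasSum_geometric_of_lt_one (by positivity) (by linarith)).mul_left _
  have hle : Real.exp x - (1 + x) ≤ x ^ 2 / 2 * (1 - x / 3)⁻¹ := by
    refine hasSum_le (fun j ↦ ?_) htail hgeom
    have h1 : x ^ 2 / 2 * (x / 3) ^ j = x ^ (j + 2) / (2 * 3 ^ j) := by
      rw [div_pow]
      field_simp
      ring
    rw [h1]
    refine div_le_div_of_nonneg_left (by positivity) (by positivity) (myFact_bound j)
  linarith

lemma myPoisson_two_tail (μ : ℝ≥0) :
    poissonMeasure μ {k : ℕ | 2 ≤ k} ≤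
      ENNReal.ofReal ((μ : ℝ) ^ 2 / 2 * Real.exp (μ : ℝ)) := by
  rw [myPoisson_apply]
  have hinj : Function.Injective (fun j : ℕ ↦ j + 2) := fun a b h ↦ by simpa using h
  have hsupp : Function.support
      (Set.indicator {k : ℕ | 2 ≤ k} (fun k ↦ poissonPMF μ k)) ⊆
      Set.range (fun j : ℕ ↦ j + 2) := by
    intro x hx
    rcases lt_or_ge x 2 with h | h
    · exfalso; apply hx; exact Set.indicator_of_notMem (by simpa using h) _
    · exact ⟨x - 2, by simp; omega⟩
  rw [← Function.Injective.tsum_eq hinj hsupp]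
  have hpt : ∀ j : ℕ, Set.indicator {k : ℕ | 2 ≤ k} (fun k ↦ poissonPMF μ k) (j + 2)
      ≤ ENNReal.ofReal ((μ : ℝ) ^ 2 / 2 * ((μ : ℝ) ^ j / j.factorial)) := by
    intro j
    rw [Set.indicator_of_mem (by simp)]
    show ENNReal.ofReal (poissonPMFReal μ (j + 2)) ≤ _
    refine ENNReal.ofReal_le_ofReal ?_
    unfold poissonPMFReal
    have h1 : Real.exp (-(μ : ℝ)) ≤ 1 := Real.exp_le_one_iff.mpr (neg_nonpos.mpr μ.coe_nonneg)
    have h2 : (μ : ℝ) ^ (j + 2) / (j + 2).factorial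
        ≤ (μ : ℝ) ^ 2 / 2 * ((μ : ℝ) ^ j / j.factorial) := by
      have hfac : (2 * (j.factorial : ℝ)) ≤ (j + 2).factorial := by
        have : 2 * j.factorial ≤ (j + 2).factorial := by
          have h3 : (j + 2).factorial = (j + 2) * ((j + 1) * j.factorial) := rfl
          have h5 : 2 ≤ (j + 2) * (j + 1) := by nlinarith
          calc 2 * j.factorial ≤ (j + 2) * (j + 1) * j.factorial :=
                Nat.mul_le_mul_right _ h5
            _ = (j + 2).factorial := by rw [h3, mul_assoc]
        exact_mod_cast this
      have h4 : (μ : ℝ) ^ 2 / 2 * ((μ : ℝ) ^ j / j.factorial)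
          = (μ : ℝ) ^ (j + 2) / (2 * j.factorial) := by
        field_simp [Nat.factorial_ne_zero]
        ring
      rw [h4]
      exact div_le_div_of_nonneg_left (by positivity) (by positivity) hfac
    have hnn : (0:ℝ) ≤ (μ : ℝ) ^ (j + 2) / (j + 2).factorial := by positivity
    calc Real.exp (-(μ:ℝ)) * (μ:ℝ) ^ (j + 2) / (j + 2).factorial
        ≤ (μ : ℝ) ^ (j + 2) / (j + 2).factorial := by
          rw [mul_div_assoc]
          nlinarith
      _ ≤ _ := h2
  calc ∑' j, Set.indicator {k : ℕ | 2 ≤ k} (fun k ↦ poissonPMF μ k) (j + 2)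
      ≤ ∑' j, ENNReal.ofReal ((μ : ℝ) ^ 2 / 2 * ((μ : ℝ) ^ j / j.factorial)) :=
        Summable.tsum_le_tsum hpt ENNReal.summable ENNReal.summable
    _ = ENNReal.ofReal (∑' j, (μ : ℝ) ^ 2 / 2 * ((μ : ℝ) ^ j / j.factorial)) := by
        refine (ENNReal.ofReal_tsum_of_nonneg (fun j ↦ by positivity) ?_).symm
        refine Summable.mul_left _ ?_
        exact (NormedSpace.expSeries_div_hasSum_exp (μ:ℝ)).summable
    _ ≤ _ := by
        refine ENNReal.ofReal_le_ofReal ?_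
        have hs : HasSum (fun j : ℕ ↦ (μ:ℝ) ^ 2 / 2 * ((μ : ℝ) ^ j / j.factorial))
            ((μ:ℝ) ^ 2 / 2 * Real.exp (μ:ℝ)) := by
          rw [Real.exp_eq_exp_ℝ]
          exact (NormedSpace.expSeries_div_hasSum_exp (μ:ℝ)).mul_left _
        rw [hs.tsum_eq]

set_option maxHeartbeats 1000000 in
/-- Lemma `nombredepoints`: if `N ~ Poisson(nF)` with `nF ≤ θ'C' ln n`,
`C' = (√6 + 1/3)γ`, `γ ≥ 1`, `θ' ∈ (0,1)` with `3(1−θ')²/(2(2θ'+1))·(√6+1/3) ≥ 4`,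
and `(1−θ')(√6+1/3) ln n ≥ 2`, then `P(N − nF ≥ (1−θ')C' ln n) ≤ F n^{−γ}`. -/
theorem stmt5 {Ω : Type*} [MeasurableSpace Ω] (P : Measure Ω) [IsProbabilityMeasure P]
    (N : Ω → ℕ) (hNm : Measurable N)
    (n : ℕ) (hn : 3 ≤ n) (F : ℝ≥0) (γ θ' C' : ℝ)
    (hγ : 1 ≤ γ) (hC : C' = (Real.sqrt 6 + 1 / 3) * γ)
    (hθ0 : 0 < θ') (hθ1 : θ' < 1)
    (hθ : 4 ≤ 3 * (1 - θ') ^ 2 / (2 * (2 * θ' + 1)) * (Real.sqrt 6 + 1 / 3))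
    (hd : Measure.map N P = poissonMeasure ((n : ℝ≥0) * F))
    (hmean : (n : ℝ) * (F : ℝ) ≤ θ' * C' * Real.log n)
    (hln : 2 ≤ (1 - θ') * (Real.sqrt 6 + 1 / 3) * Real.log n) :
    P {ω | (1 - θ') * C' * Real.log n ≤ (N ω : ℝ) - (n : ℝ) * (F : ℝ)}
      ≤ ENNReal.ofReal ((F : ℝ) * (n : ℝ) ^ (-γ)) := by
  have hn3 : (3 : ℝ) ≤ (n : ℝ) := by exact_mod_cast hn
  have hn1 : (1 : ℝ) < (n : ℝ) := by linarith
  have hn0 : (0 : ℝ) < (n : ℝ) := by linarith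
  set L := Real.log n with hL_def
  have hL : 0 < L := hL_def ▸ Real.log_pos hn1
  have hs6 : 0 < Real.sqrt 6 + 1 / 3 := by positivity
  set t := (1 - θ') * C' * L with ht_def
  set m := (n : ℝ) * (F : ℝ) with hm_def
  clear_value L t m
  have hm0 : 0 ≤ m := by rw [hm_def]; positivity
  have ht2 : 2 ≤ t := by
    have heq : t = γ * ((1 - θ') * (Real.sqrt 6 + 1 / 3) * L) := by
      rw [ht_def, hC]; ring
    nlinarith
  have hcast : (((n : ℝ≥0) * F : ℝ≥0) : ℝ) = m := by rw [hm_def]; push_cast; ring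
  have hset : {ω | t ≤ (N ω : ℝ) - m} = N ⁻¹' {k : ℕ | m + t ≤ (k : ℝ)} := by
    ext ω
    simp only [Set.mem_setOf_eq, Set.mem_preimage]
    constructor <;> intro h <;> linarith
  have hmap : P {ω | t ≤ (N ω : ℝ) - m}
      = poissonMeasure ((n : ℝ≥0) * F) {k : ℕ | m + t ≤ (k : ℝ)} := by
    rw [hset, ← hd, Measure.map_apply hNm MeasurableSet.of_discrete]
  rw [hmap]
  by_cases hcase : m ≤ (n : ℝ) ^ (-(γ + 1))
  · -- small-mean case
    have hsub : {k : ℕ | m + t ≤ (k : ℝ)} ⊆ {k : ℕ | 2 ≤ k} := by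
      intro k hk
      simp only [Set.mem_setOf_eq] at hk ⊢
      have h2k : (2 : ℝ) ≤ (k : ℝ) := by linarith
      exact_mod_cast h2k
    refine le_trans (measure_mono hsub) (le_trans (myPoisson_two_tail _)
      (ENNReal.ofReal_le_ofReal ?_))
    rw [hcast]
    have h9 : (9 : ℝ) ≤ (n : ℝ) ^ (γ + 1) := by
      calc (9 : ℝ) = (3 : ℝ) ^ ((2 : ℕ) : ℝ) := by
            rw [Real.rpow_natCast]; norm_num
        _ ≤ (3 : ℝ) ^ (γ + 1) :=
            Real.rpow_le_rpow_of_exponent_le (by norm_num) (by push_cast; linarith)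
        _ ≤ (n : ℝ) ^ (γ + 1) := Real.rpow_le_rpow (by norm_num) hn3 (by linarith)
    have hB9 : (n : ℝ) ^ (-(γ + 1)) ≤ 1 / 9 := by
      rw [Real.rpow_neg hn0.le]
      rw [show (1 : ℝ) / 9 = ((9 : ℝ))⁻¹ by norm_num]
      exact inv_anti₀ (by norm_num) h9
    have hexp2 : Real.exp m ≤ 2 := by
      have hm2 : m ≤ Real.log 2 := by
        have := Real.log_two_gt_d9
        linarith
      calc Real.exp m ≤ Real.exp (Real.log 2) := Real.exp_le_exp.mpr hm2
        _ = 2 := Real.exp_log (by norm_num)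
    have hnB : (n : ℝ) * (n : ℝ) ^ (-(γ + 1)) = (n : ℝ) ^ (-γ) := by
      calc (n : ℝ) * (n : ℝ) ^ (-(γ + 1))
          = (n : ℝ) ^ (1 : ℝ) * (n : ℝ) ^ (-(γ + 1)) := by rw [Real.rpow_one]
        _ = (n : ℝ) ^ (1 + -(γ + 1)) := (Real.rpow_add hn0 _ _).symm
        _ = (n : ℝ) ^ (-γ) := by congr 1; ring
    calc m ^ 2 / 2 * Real.exp m ≤ m * m := by nlinarith
      _ ≤ m * ((n : ℝ) ^ (-(γ + 1))) := mul_le_mul_of_nonneg_left hcase hm0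
      _ = (F : ℝ) * ((n : ℝ) * (n : ℝ) ^ (-(γ + 1))) := by rw [hm_def]; ring
      _ = (F : ℝ) * (n : ℝ) ^ (-γ) := by rw [hnB]
  · -- Chernoff / Bernstein case
    push_neg at hcase
    set l := 3 * (1 - θ') / (2 * θ' + 1) with hl_def
    clear_value l
    have hden : (0 : ℝ) < 2 * θ' + 1 := by linarith
    have hl0 : 0 ≤ l := by rw [hl_def]; exact div_nonneg (by linarith) hden.le
    have hl3 : l < 3 := by
      rw [hl_def, div_lt_iff₀ hden]; nlinarith
    refine le_trans (myPoisson_chernoff _ (m + t) l hl0)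
      (ENNReal.ofReal_le_ofReal ?_)
    rw [hcast]
    have hinv : (1 - l / 3)⁻¹ = (2 * θ' + 1) / (3 * θ') := by
      rw [hl_def]
      rw [inv_eq_iff_eq_inv, inv_div]
      field_simp
      ring
    have hkey : m * (Real.exp l - 1) - l * (m + t) ≤ -(l * t / 2) := by
      have h1 : Real.exp l - 1 - l ≤ l ^ 2 / 2 * (1 - l / 3)⁻¹ := by
        have := myExp_quad hl0 hl3
        linarith
      have h2 : m * (Real.exp l - 1 - l) ≤ m * (l ^ 2 / 2 * (1 - l / 3)⁻¹) :=
        mul_le_mul_of_nonneg_left h1 hm0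
      have h3 : m * (l ^ 2 / 2 * (1 - l / 3)⁻¹) ≤ l * t / 2 := by
        have hmean' : m ≤ θ' * C' * L := hmean
        have hfac : (0 : ℝ) ≤ 3 * (1 - θ') ^ 2 := by positivity
        have hne1 : (2 * θ' + 1) ≠ 0 := hden.ne'
        have hne2 : θ' ≠ 0 := hθ0.ne'
        have hx : l ^ 2 / 2 * (1 - l / 3)⁻¹ = 3 * (1 - θ') ^ 2 / (2 * θ' * (2 * θ' + 1)) := by
          rw [hinv, hl_def]
          field_simp
        have hy : l * t / 2 = θ' * C' * L * (3 * (1 - θ') ^ 2 / (2 * θ' * (2 * θ' + 1))) := by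
          rw [hl_def, ht_def]
          field_simp
        rw [hx, hy]
        refine mul_le_mul_of_nonneg_right hmean' (div_nonneg hfac (le_of_lt (mul_pos (by linarith) hden)))
      linarith [h2, h3]
    have h4l : 4 * (γ * L) ≤ l * t / 2 := by
      have heq : l * t / 2
          = 3 * (1 - θ') ^ 2 / (2 * (2 * θ' + 1)) * (Real.sqrt 6 + 1 / 3) * (γ * L) := by
        rw [hl_def, ht_def, hC]
        field_simp
      rw [heq]
      exact mul_le_mul_of_nonneg_right hθ (le_of_lt (mul_pos (by linarith) hL))
    have hbound : Real.exp (m * (Real.exp l - 1) - l * (m + t)) ≤ (n : ℝ) ^ (-(4 * γ)) := by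
      rw [Real.rpow_def_of_pos hn0]
      apply Real.exp_le_exp.mpr
      have : L * -(4 * γ) = -(4 * (γ * L)) := by ring
      rw [← hL_def, this]
      linarith
    refine hbound.trans ?_
    have hF : (n : ℝ) ^ (-(γ + 2)) ≤ (F : ℝ) := by
      have hsplit : (n : ℝ) ^ (-(γ + 2)) = (n : ℝ) ^ (-(γ + 1)) / (n : ℝ) := by
        rw [show -(γ + 2) = -(γ + 1) - 1 by ring, Real.rpow_sub hn0, Real.rpow_one]
      rw [hsplit, div_le_iff₀ hn0]
      nlinarith [hcase]
    calc (n : ℝ) ^ (-(4 * γ)) ≤ (n : ℝ) ^ (-(γ + 2) + -γ) :=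
          Real.rpow_le_rpow_of_exponent_le hn1.le (by linarith)
      _ = (n : ℝ) ^ (-(γ + 2)) * (n : ℝ) ^ (-γ) := Real.rpow_add hn0 _ _
      _ ≤ (F : ℝ) * (n : ℝ) ^ (-γ) :=
          mul_le_mul_of_nonneg_right hF (Real.rpow_nonneg hn0.le _)
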